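/- Let 0 ≤ p' < p'' ≤ p* ≤ 1 (or 1 ≥ p' > p'' ≥ p* ≥ 0) with p' ≠ p*, and let μ > 0. Define Y^split = μ(p''−p') / (p*−p' + μ(p''−p')) and Y^slide = 1 − ((p*−p'')/(p*−p'))^μ. Then Y^slide ≥ Y^split. -/

import Mathlib

lemma key_ineq (μ t : ℝ) (hμ : 0 < μ) (ht0 : 0 < t) (ht1 : t ≤ 1) :
    1 - (1 - t) ^ μ ≥ μ * t / (1 + μ * t) := by
  have hpos : 0 < 1 + μ * t := by positivity
  have h1 : (1 - t) ^ μ ≤ Real.exp (-t) ^ μ := by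
    apply Real.rpow_le_rpow (by linarith) _ hμ.le
    have := Real.add_one_le_exp (-t)
    linarith
  have h2 : Real.exp (-t) ^ μ = Real.exp (-(μ * t)) := by
    rw [← Real.exp_mul]; ring_nf
  have h3 : Real.exp (-(μ * t)) ≤ 1 / (1 + μ * t) := by
    rw [Real.exp_neg, one_div, inv_le_inv₀ (Real.exp_pos _) hpos]
    linarith [Real.add_one_le_exp (μ * t)]
  have h4 : 1 - 1 / (1 + μ * t) = μ * t / (1 + μ * t) := by
    field_simp
    ring
  have := h1.trans (h2.le.trans h3)
  linarith [h4]

theorem stmt_3 (μ p' p'' pstar : ℝ) (hμ : 0 < μ)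
    (h : (0 ≤ p' ∧ p' < p'' ∧ p'' ≤ pstar ∧ pstar ≤ 1) ∨
         (1 ≥ p' ∧ p' > p'' ∧ p'' ≥ pstar ∧ pstar ≥ 0))
    (hne : p' ≠ pstar) :
    1 - ((pstar - p'') / (pstar - p')) ^ μ ≥
      μ * (p'' - p') / (pstar - p' + μ * (p'' - p')) := by
  set a := pstar - p' with ha
  set d := p'' - p' with hd
  have hane : a ≠ 0 := sub_ne_zero.mpr (Ne.symm hne)
  have ht0 : 0 < d / a := by
    rcases h with ⟨_, h1, h2, _⟩ | ⟨_, h1, h2, _⟩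
    · have : 0 < a := by simp [ha]; linarith
      exact div_pos (by simp [hd]; linarith) this
    · have : a < 0 := by simp [ha]; linarith
      exact div_pos_of_neg_of_neg (by simp [hd]; linarith) this
  have ht1 : d / a ≤ 1 := by
    rcases h with ⟨_, h1, h2, _⟩ | ⟨_, h1, h2, _⟩
    · have haa : 0 < a := by simp [ha]; linarith
      rw [div_le_one haa]; simp [hd, ha]; linarith
    · have haa : a < 0 := by simp [ha]; linarith
      rw [div_le_one_iff]
      refine Or.inr (Or.inr ⟨haa, ?_⟩)
      simp only [ha, hd]; linarith
  have hratio : (pstar - p'') / (pstar - p') = 1 - d / a := by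
    field_simp [ha, hd]
    rw [ha, hd]; ring
  have hden : 1 + μ * (d / a) > 0 := by positivity
  have hsum : a + μ * d = a * (1 + μ * (d / a)) := by
    field_simp
  have hne2 : a + μ * d ≠ 0 := by
    rw [hsum]; exact mul_ne_zero hane (ne_of_gt hden)
  have hrhs : μ * d / (a + μ * d) = μ * (d / a) / (1 + μ * (d / a)) := by
    field_simp
  rw [hratio, hrhs]
  exact key_ineq μ (d / a) hμ ht0 ht1
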